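/- Dually to the co-Kleisli construction: if C is a category with a monad ? and finite products (1, &), then the Kleisli category C^? has weak finite products, with the weak product of A and B given by ?A & ?B, and 1 as weak terminal object. -/

import Mathlib

open CategoryTheory CategoryTheory.Limits

universe v u

/-- Dually to the co-Kleisli construction: if `C` is a category with a monad
`T` (written `?`) and finite products `(⊤_ C, ⨯)`, then the Kleisli category `C^?`
(whose morphisms `A → B` are morphisms `A ⟶ ?B` of `C`, with composition
`u ; v = u ≫ ?v ≫ μ`) has weak finite products: the weak product of `A` and `B` is
`?A ⨯ ?B` with projections `π₁ : ?A ⨯ ?B ⟶ ?A` and `π₂ : ?A ⨯ ?B ⟶ ?B`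
(viewed as Kleisli morphisms), and `⊤_ C` is a weak terminal object. -/
theorem monad_kleisli_weak_products
    {C : Type u} [Category.{v} C] [HasFiniteProducts C]
    (T : Monad C) :
    -- ⊤_ C is a weak terminal object of the Kleisli category
    (∀ A : C, ∃ _t : A ⟶ T.obj (⊤_ C), True) ∧
    -- ?A ⨯ ?B, with the projections as Kleisli morphisms, is a weak binary product
    (∀ A B X : C, ∀ (f : X ⟶ T.obj A) (g : X ⟶ T.obj B),
      ∃ h : X ⟶ T.obj (T.obj A ⨯ T.obj B),
        -- π₁ ∘ h = f in the Kleisli category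
        h ≫ T.map (prod.fst : T.obj A ⨯ T.obj B ⟶ T.obj A) ≫ T.μ.app A = f ∧
        -- π₂ ∘ h = g in the Kleisli category
        h ≫ T.map (prod.snd : T.obj A ⨯ T.obj B ⟶ T.obj B) ≫ T.μ.app B = g) := by
  constructor
  · intro A
    exact ⟨terminal.from A ≫ T.η.app _, trivial⟩
  · intro A B X f g
    refine ⟨prod.lift f g ≫ T.η.app _, ?_, ?_⟩ <;>
      simp [Category.assoc, ← T.η.naturality_assoc, prod.lift_fst, prod.lift_snd]
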